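/- Let p be a probability vector with positive entries, W an M×M₀ matrix, A = D_p^{-1/2} Σ_p W of full column rank, and P = A(AᵀA)^{-1}Aᵀ. Then (I_M − P) D_p^{-1/2} Σ_p D_p^{-1/2} (I_M − P) = D_p^{-1/2}(Σ_p − Σ_p W (Wᵀ Σ_p W)^{-1} Wᵀ Σ_p) D_p^{-1/2}. -/
import Mathlib
open Matrix

lemma sigma_dinv_sigma {M : ℕ} (p : Fin M → ℝ) (hp : ∀ r, 0 < p r) (hsum : ∑ r, p r = 1) :
    (Matrix.diagonal p - Matrix.vecMulVec p p) * Matrix.diagonal (fun r => (p r)⁻¹) *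
      (Matrix.diagonal p - Matrix.vecMulVec p p) = (Matrix.diagonal p - Matrix.vecMulVec p p) := by
  have h1 : Matrix.diagonal p * Matrix.diagonal (fun r => (p r)⁻¹) = 1 := by
    rw [diagonal_mul_diagonal]
    simp [funext_iff, fun r => (hp r).ne']
  have h2 : Matrix.vecMulVec p p * Matrix.diagonal (fun r => (p r)⁻¹) = Matrix.vecMulVec p 1 := by
    ext i j
    simp [mul_apply, vecMulVec_apply, diagonal_apply, Finset.sum_ite_eq,
      mul_inv_cancel_right₀ (hp j).ne']
  have h3 : Matrix.vecMulVec p 1 * Matrix.diagonal p = Matrix.vecMulVec p p := by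
    ext i j
    simp [mul_apply, vecMulVec_apply, diagonal_apply, Finset.sum_ite_eq]
  have h4 : Matrix.vecMulVec p (1 : Fin M → ℝ) * Matrix.vecMulVec p p = Matrix.vecMulVec p p := by
    ext i j
    simp [mul_apply, vecMulVec_apply, ← Finset.sum_mul, ← Finset.mul_sum, hsum]
  rw [sub_mul, h1, h2, sub_mul, one_mul, mul_sub, h3, h4]
  simp


lemma proj_expand {n : ℕ} (S P : Matrix (Fin n) (Fin n) ℝ)
    (hPS : P * S = P) (hSP : S * P = P) (hPP : P * P = P) :
    ((1 : Matrix (Fin n) (Fin n) ℝ) - P) * S * (1 - P) = S - P := by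
  have expand : ((1 : Matrix (Fin n) (Fin n) ℝ) - P) * S * (1 - P)
      = S - P * S - S * P + P * S * P := by noncomm_ring
  rw [expand, hPS, hSP, hPP]
  abel

lemma proj_variance_aux {M M₀ : ℕ} (D Sg : Matrix (Fin M) (Fin M) ℝ)
    (W A : Matrix (Fin M) (Fin M₀) ℝ)
    (hA : A = D * Sg * W) (hDsym : Dᵀ = D) (hSsym : Sgᵀ = Sg)
    (hkey : Sg * (D * D) * Sg = Sg) (hrank : A.rank = M₀) :
    ((1 : Matrix (Fin M) (Fin M) ℝ) - A * (Aᵀ * A)⁻¹ * Aᵀ) * (D * Sg * D) *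
        ((1 : Matrix (Fin M) (Fin M) ℝ) - A * (Aᵀ * A)⁻¹ * Aᵀ) =
      D * (Sg - Sg * W * (Wᵀ * Sg * W)⁻¹ * Wᵀ * Sg) * D := by
  have hAT : Aᵀ = Wᵀ * Sg * D := by
    rw [hA, transpose_mul, transpose_mul, hSsym, hDsym, Matrix.mul_assoc]
  have hAA : Aᵀ * A = Wᵀ * Sg * W := by
    rw [hAT, hA]
    calc Wᵀ * Sg * D * (D * Sg * W) = Wᵀ * (Sg * (D * D) * Sg) * W := by
          simp only [Matrix.mul_assoc]
      _ = Wᵀ * Sg * W := by rw [hkey, Matrix.mul_assoc]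
  have hunit : IsUnit (Aᵀ * A) := by
    have hr : (Aᵀ * A).rank = M₀ := by rw [Matrix.rank_transpose_mul_self, hrank]
    rw [← Matrix.mulVec_surjective_iff_isUnit]
    have ht : LinearMap.range (Aᵀ * A).mulVecLin = ⊤ := by
      apply Submodule.eq_top_of_finrank_eq
      rw [← Matrix.rank, hr, Module.finrank_fintype_fun_eq_card, Fintype.card_fin]
    intro y
    exact (LinearMap.range_eq_top.mp ht) y
  have hGinv : (Aᵀ * A)⁻¹ * (Aᵀ * A) = 1 :=
    Matrix.nonsing_inv_mul _ ((Matrix.isUnit_iff_isUnit_det _).mp hunit)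
  have hSA : (D * Sg * D) * A = A := by
    rw [hA]
    calc D * Sg * D * (D * Sg * W) = D * (Sg * (D * D) * Sg) * W := by
          simp only [Matrix.mul_assoc]
      _ = D * Sg * W := by rw [hkey]
  have hAS : Aᵀ * (D * Sg * D) = Aᵀ := by
    have hSsym2 : (D * Sg * D)ᵀ = D * Sg * D := by
      rw [transpose_mul, transpose_mul, hSsym, hDsym, Matrix.mul_assoc]
    calc Aᵀ * (D * Sg * D) = ((D * Sg * D)ᵀ * A)ᵀ := by
          rw [transpose_mul, transpose_transpose]
      _ = Aᵀ := by rw [hSsym2, hSA]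
  have hPS : (A * (Aᵀ * A)⁻¹ * Aᵀ) * (D * Sg * D) = A * (Aᵀ * A)⁻¹ * Aᵀ := by
    rw [Matrix.mul_assoc (A * (Aᵀ * A)⁻¹), hAS]
  have hSP : (D * Sg * D) * (A * (Aᵀ * A)⁻¹ * Aᵀ) = A * (Aᵀ * A)⁻¹ * Aᵀ := by
    rw [← Matrix.mul_assoc, ← Matrix.mul_assoc, hSA]
  have hPP : (A * (Aᵀ * A)⁻¹ * Aᵀ) * (A * (Aᵀ * A)⁻¹ * Aᵀ) = A * (Aᵀ * A)⁻¹ * Aᵀ := by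
    calc (A * (Aᵀ * A)⁻¹ * Aᵀ) * (A * (Aᵀ * A)⁻¹ * Aᵀ)
        = A * ((Aᵀ * A)⁻¹ * (Aᵀ * A)) * ((Aᵀ * A)⁻¹ * Aᵀ) := by simp only [Matrix.mul_assoc]
      _ = A * (Aᵀ * A)⁻¹ * Aᵀ := by rw [hGinv, Matrix.mul_one, Matrix.mul_assoc]
  rw [proj_expand _ _ hPS hSP hPP, ← hAA]
  have e1 : D * (Sg - Sg * W * (Aᵀ * A)⁻¹ * Wᵀ * Sg) * D
      = D * Sg * D - (D * Sg * W) * (Aᵀ * A)⁻¹ * (Wᵀ * Sg * D) := by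
    rw [mul_sub, sub_mul]
    congr 1
    simp only [Matrix.mul_assoc]
  rw [e1, ← hA, ← hAT]

/-- `(I - P) D_p^{-1/2} Σ_p D_p^{-1/2} (I - P)
  = D_p^{-1/2} (Σ_p - Σ_p W (Wᵀ Σ_p W)⁻¹ Wᵀ Σ_p) D_p^{-1/2}`. -/
theorem proj_variance_identity {M M₀ : ℕ} (p : Fin M → ℝ) (hp : ∀ r, 0 < p r)
    (hsum : ∑ r, p r = 1) (W : Matrix (Fin M) (Fin M₀) ℝ)
    (A : Matrix (Fin M) (Fin M₀) ℝ)
    (hA : A = Matrix.diagonal (fun r => (Real.sqrt (p r))⁻¹) *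
        (Matrix.diagonal p - Matrix.vecMulVec p p) * W)
    (hrank : A.rank = M₀) :
    ((1 : Matrix (Fin M) (Fin M) ℝ) - A * (Aᵀ * A)⁻¹ * Aᵀ) *
        (Matrix.diagonal (fun r => (Real.sqrt (p r))⁻¹) *
          (Matrix.diagonal p - Matrix.vecMulVec p p) *
          Matrix.diagonal (fun r => (Real.sqrt (p r))⁻¹)) *
        ((1 : Matrix (Fin M) (Fin M) ℝ) - A * (Aᵀ * A)⁻¹ * Aᵀ) =
      Matrix.diagonal (fun r => (Real.sqrt (p r))⁻¹) *
        ((Matrix.diagonal p - Matrix.vecMulVec p p) -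
          (Matrix.diagonal p - Matrix.vecMulVec p p) * W *
            (Wᵀ * (Matrix.diagonal p - Matrix.vecMulVec p p) * W)⁻¹ *
            Wᵀ * (Matrix.diagonal p - Matrix.vecMulVec p p)) *
        Matrix.diagonal (fun r => (Real.sqrt (p r))⁻¹) := by
  apply proj_variance_aux _ _ _ _ hA (diagonal_transpose _) _ _ hrank
  · rw [transpose_sub, diagonal_transpose]
    congr 1
    ext i j
    simp [vecMulVec_apply, mul_comm]
  · have hfun : (fun r => (Real.sqrt (p r))⁻¹ * (Real.sqrt (p r))⁻¹) = fun r => (p r)⁻¹ := by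
      funext r
      rw [← mul_inv, Real.mul_self_sqrt (hp r).le]
    rw [diagonal_mul_diagonal, hfun]
    exact sigma_dinv_sigma p hp hsum
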